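/- Let w₀ ∈ W and z₀ ∈ Z, and suppose z : ℝ → Z is continuously differentiable and η : ℝ → H is continuous with z(0) = z₀ and, for all t ∈ ℝ, z'(t) = J_A(∇H_A(z(t)) + C*(η(t))) and η(t) = S_t(w₀ + C z₀) − C z(t) + ∫₀ᵗ S_{t−s}(C z'(s)) ds. Then w(t) := P(η(t)) is continuously differentiable on [0, ∞), satisfies w(0) = w₀, and for all t ≥ 0 the pair (z, w) solves the closed coarse-grained system z'(t) = J_A(∇H_A(z(t)) + C*(w(t))) and w'(t) = −D(w(t) + C z(t)). -/

import Mathlib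

open RealInnerProductSpace

/-- Helper instance: the ring of continuous endomorphisms of a submodule of an inner
product space, with its operator-norm topology, is a topological ring.  (This instance
exists in Mathlib but is not found by instance search at reducible transparency.) -/
noncomputable instance topologicalRing_clm_submodule''
    {H : Type*} [NormedAddCommGroup H] [InnerProductSpace ℝ H]
    (W : Submodule ℝ H) : IsTopologicalRing (↥W →L[ℝ] ↥W) := by
  exact @NonUnitalSeminormedRing.toIsTopologicalRing (↥W →L[ℝ] ↥W) inferInstance

set_option synthInstance.maxHeartbeats 1000000 in
set_option maxHeartbeats 3000000 in
/-- In the setting of the coupled microscopic system, let `W ⊆ H`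
be a finite-dimensional subspace containing the range of `C`, `P` the orthogonal
projection onto `W`, and `D : W → W` a linear map with the compression property
`P(S_t v) = e^{−tD} v` for `t ≥ 0`, `v ∈ W`.  If `(z, η)` solves the microscopic
system with initial heat-bath state `w₀ ∈ W`, then `w(t) := P(η(t))` is continuously
differentiable on `[0, ∞)`, `w(0) = w₀`, and for all `t ≥ 0` the pair `(z, w)`
solves the closed coarse-grained system
`z'(t) = J_A(∇H_A(z(t)) + C*(w(t)))`, `w'(t) = −D(w(t) + C z(t))`. -/
theorem coarse_grained_closed_system
    {Z : Type*} [NormedAddCommGroup Z] [InnerProductSpace ℝ Z] [FiniteDimensional ℝ Z]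
    {H : Type*} [NormedAddCommGroup H] [InnerProductSpace ℝ H] [CompleteSpace H]
    (S : ℝ → H →L[ℝ] H)
    (hS0 : S 0 = ContinuousLinearMap.id ℝ H)
    (hSadd : ∀ t s : ℝ, S (t + s) = (S t) ∘L (S s))
    (hSiso : ∀ (t : ℝ) (x : H), ‖S t x‖ = ‖x‖)
    (hSsurj : ∀ t : ℝ, Function.Surjective (S t))
    (hScont : ∀ η : H, Continuous fun t : ℝ => S t η)
    (JA : Z →L[ℝ] Z) (hJA : ContinuousLinearMap.adjoint JA = -JA)
    (C : Z →L[ℝ] H)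
    (HA : Z → ℝ) (hHA : ContDiff ℝ 1 HA)
    (L : NNReal) (hLip : LipschitzWith L (gradient HA))
    (W : Submodule ℝ H) [FiniteDimensional ℝ W]
    (hCrange : ∀ z : Z, C z ∈ W)
    (D : W →L[ℝ] W)
    (hcomp : ∀ t : ℝ, 0 ≤ t → ∀ v : W,
      W.orthogonalProjectionOnto (S t (v : H)) = NormedSpace.exp ((-t) • D) v)
    (z₀ : Z) (w₀ : W)
    (z : ℝ → Z) (η : ℝ → H)
    (hz : ContDiff ℝ 1 z) (hη : Continuous η) (hz0 : z 0 = z₀)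
    (hzeq : ∀ t : ℝ,
      deriv z t = JA (gradient HA (z t) + ContinuousLinearMap.adjoint C (η t)))
    (hηeq : ∀ t : ℝ,
      η t = S t ((w₀ : H) + C z₀) - C (z t)
        + ∫ s in (0 : ℝ)..t, S (t - s) (C (deriv z s))) :
    W.orthogonalProjectionOnto (η 0) = w₀ ∧
    ContDiffOn ℝ 1 (fun t : ℝ => W.orthogonalProjectionOnto (η t)) (Set.Ici 0) ∧
    ∀ t : ℝ, 0 ≤ t →
      deriv z t = JA (gradient HA (z t)
        + ContinuousLinearMap.adjoint C ((W.orthogonalProjectionOnto (η t) : H))) ∧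
      HasDerivWithinAt (fun s : ℝ => W.orthogonalProjectionOnto (η s))
        (-(D (W.orthogonalProjectionOnto (η t) + ⟨C (z t), hCrange (z t)⟩)))
        (Set.Ici 0) t := by
  classical
  haveI iSC : SMulCommClass ℝ (↥W →L[ℝ] ↥W) (↥W →L[ℝ] ↥W) :=
    ⟨fun r a b => by ext v; simp [smul_eq_mul, ContinuousLinearMap.mul_apply]⟩
  haveI iST : IsScalarTower ℝ (↥W →L[ℝ] ↥W) (↥W →L[ℝ] ↥W) :=
    ⟨fun r a b => by ext v; simp [smul_eq_mul, ContinuousLinearMap.mul_apply]⟩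
  have hexpadd := fun (a b : (↥W →L[ℝ] ↥W)) (h : Commute a b) =>
    by letI : NormedAlgebra ℚ (↥W →L[ℝ] ↥W) := NormedAlgebra.restrictScalars ℚ ℝ _; exact NormedSpace.exp_add_of_commute (𝔸 := ↥W →L[ℝ] ↥W) h
  have hexpzero : NormedSpace.exp (0 : ↥W →L[ℝ] ↥W) = 1 :=
    NormedSpace.exp_zero
  have hzd : Differentiable ℝ z := hz.differentiable one_ne_zero
  have hz' : Continuous (deriv z) := hz.continuous_deriv le_rfl
  set Cw : Z →L[ℝ] W := C.codRestrict W hCrange with hCwdef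
  have hCwcoe : ∀ x : Z, ((Cw x : H)) = C x := fun x => rfl
  set g : ℝ → W := fun s => Cw (deriv z s) with hgdef
  have hgc : Continuous g := Cw.continuous.comp hz'
  set E : ℝ → (W →L[ℝ] W) := fun t => NormedSpace.exp (t • (-D)) with hEdef
  have hEd : ∀ t : ℝ, HasDerivAt E (E t * (-D)) t :=
    fun t => hasDerivAt_exp_smul_const (-D) t
  have hEeq : ∀ t : ℝ, NormedSpace.exp ((-t) • D) = E t :=
    fun t => congrArg (NormedSpace.exp) ((neg_smul t D).trans (smul_neg t D).symm)
  have hcomm : ∀ a b : ℝ, Commute (a • (-D)) (b • D) :=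
    fun a b => (((Commute.refl D).neg_left).smul_left a).smul_right b
  have hexpDd : ∀ s : ℝ, HasDerivAt (fun u : ℝ => NormedSpace.exp (u • D))
      (NormedSpace.exp (s • D) * D) s := fun s => hasDerivAt_exp_smul_const D s
  have hexpDc : Continuous fun s : ℝ => NormedSpace.exp (s • D) := by
    rw [continuous_iff_continuousAt]
    exact fun s => by have := HasDerivAt.continuousAt (𝕜 := ℝ) (F := ↥W →L[ℝ] ↥W) (hexpDd s); exact this
  set k : ℝ → W := fun s => NormedSpace.exp (s • D) (g s) with hkdef
  have hkc : Continuous k := hexpDc.clm_apply hgc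
  set I : ℝ → W := fun t => ∫ s in (0:ℝ)..t, k s with hIdef
  set v0 : W := w₀ + Cw z₀ with hv0def
  set u : ℝ → W := fun t => E t (v0 + I t) with hudef
  set F : ℝ → W := fun t => u t - Cw (z t) with hFdef
  -- adjoint of C factors through projection
  have hC'P : ∀ x : H, ContinuousLinearMap.adjoint C x
      = ContinuousLinearMap.adjoint C ((W.orthogonalProjectionOnto x : H)) := by
    intro x
    apply ext_inner_right ℝ
    intro ζ
    rw [ContinuousLinearMap.adjoint_inner_left, ContinuousLinearMap.adjoint_inner_left]
    have h0 : ⟪C ζ, x - (W.orthogonalProjectionOnto x : H)⟫ = 0 :=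
      (Submodule.mem_orthogonal W _).1 (Submodule.sub_starProjection_mem_orthogonal x)
        (C ζ) (hCrange ζ)
    rw [inner_sub_right] at h0
    have h1 := sub_eq_zero.mp h0
    have e1 := real_inner_comm (C ζ) x
    have e2 := real_inner_comm (C ζ) ((W.orthogonalProjectionOnto x : H))
    linarith
  -- projection of η for t ≥ 0
  have hPF : ∀ t ∈ Set.Ici (0:ℝ), (W.orthogonalProjectionOnto (η t) : W) = F t := by
    intro t ht
    have ht : (0:ℝ) ≤ t := ht
    have hφ : Continuous fun s : ℝ => C (deriv z s) := C.continuous.comp hz'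
    have hfc : Continuous fun s : ℝ => S (t - s) (C (deriv z s)) := by
      rw [continuous_iff_continuousAt]
      intro s₀
      have h1 : Filter.Tendsto
          (fun s => S (t - s) (C (deriv z s)) - S (t - s) (C (deriv z s₀)))
          (nhds s₀) (nhds 0) := by
        have hb : ∀ s : ℝ, ‖S (t - s) (C (deriv z s)) - S (t - s) (C (deriv z s₀))‖
            = ‖C (deriv z s) - C (deriv z s₀)‖ := fun s => by rw [← map_sub, hSiso]
        apply squeeze_zero_norm (fun s => le_of_eq (hb s))
        have h2 : Filter.Tendsto (fun s => ‖C (deriv z s) - C (deriv z s₀)‖)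
              (nhds s₀) (nhds ‖C (deriv z s₀) - C (deriv z s₀)‖) :=
            ((hφ.sub continuous_const).norm).continuousAt
        simpa using h2
      have h2 : Filter.Tendsto (fun s => S (t - s) (C (deriv z s₀)))
          (nhds s₀) (nhds (S (t - s₀) (C (deriv z s₀)))) :=
        ((hScont (C (deriv z s₀))).comp (continuous_const.sub continuous_id)).continuousAt
      have h3 := h1.add h2
      have h4 : (fun s => (S (t - s) (C (deriv z s)) - S (t - s) (C (deriv z s₀)))
          + S (t - s) (C (deriv z s₀))) = fun s => S (t - s) (C (deriv z s)) := by
        funext s; abel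
      rw [h4, zero_add] at h3
      exact h3
    have hfi : IntervalIntegrable (fun s : ℝ => S (t - s) (C (deriv z s)))
        MeasureTheory.volume 0 t := hfc.intervalIntegrable 0 t
    rw [hηeq t, map_add, map_sub]
    have h1 : W.orthogonalProjectionOnto (S t ((w₀:H) + C z₀)) = E t v0 := by
      have hcoe : ((v0 : W) : H) = (w₀:H) + C z₀ := by
        rw [hv0def]; push_cast; rw [hCwcoe]
      rw [← hcoe, hcomp t ht v0, hEeq]
    have h2 : W.orthogonalProjectionOnto (C (z t)) = Cw (z t) :=
      Submodule.orthogonalProjectionOnto_mem_subspace_eq_self (Cw (z t))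
    have h3 : W.orthogonalProjectionOnto
        (∫ s in (0:ℝ)..t, S (t - s) (C (deriv z s))) = E t (I t) := by
      rw [← ContinuousLinearMap.intervalIntegral_comp_comm
        (W.orthogonalProjectionOnto) hfi]
      have hcg : ∀ s ∈ Set.uIcc (0:ℝ) t,
          W.orthogonalProjectionOnto (S (t - s) (C (deriv z s))) = E t (k s) := by
        intro s hs
        rw [Set.uIcc_of_le ht] at hs
        have hts : (0:ℝ) ≤ t - s := sub_nonneg.mpr hs.2
        have hc := hcomp (t - s) hts (Cw (deriv z s))
        rw [hCwcoe] at hc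
        rw [hc]
        have hsplit : (-(t - s)) • D = t • (-D) + s • D := by
          have hr : -(t - s) = -t + s := by ring
          have e0 : (-(t - s)) • D = ((-t) + s) • D := by rw [hr]
          have e1 : ((-t) + s) • D = (-t) • D + s • D := add_smul (-t) s D
          have e2 : (-t) • D = t • (-D) := (neg_smul t D).trans (smul_neg t D).symm
          exact e0.trans (e1.trans (congrArg (fun y => y + s • D) e2))
        rw [hsplit, hexpadd _ _ (hcomm t s), ContinuousLinearMap.mul_apply]
      rw [intervalIntegral.integral_congr hcg,
        ContinuousLinearMap.intervalIntegral_comp_comm (E t)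
          (hkc.intervalIntegrable 0 t)]
    rw [h1, h2, h3, hFdef, hudef]
    simp only [map_add]
    abel
  -- derivative computations
  have hCz : ∀ t : ℝ, HasDerivAt (fun t => Cw (z t)) (g t) t :=
    fun t => Cw.hasFDerivAt.comp_hasDerivAt t (hzd t).hasDerivAt
  have hId : ∀ t : ℝ, HasDerivAt I (k t) t :=
    fun t => (hkc.integral_hasStrictDerivAt 0 t).hasDerivAt
  have hone : ∀ t : ℝ, E t * NormedSpace.exp (t • D) = 1 := by
    intro t
    show NormedSpace.exp (t • (-D)) * NormedSpace.exp (t • D) = 1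
    rw [← hexpadd _ _ (hcomm t t)]
    have hzero : t • (-D) + t • D = 0 := by rw [smul_neg, neg_add_cancel]
    rw [hzero, hexpzero]
  have hud : ∀ t : ℝ, HasDerivAt u (-(D (u t)) + g t) t := by
    intro t
    have h := (hEd t).clm_apply ((hasDerivAt_const t v0).add (hId t))
    have hcE : Commute (E t) (-D) :=
      Commute.exp_left ((Commute.refl (-D)).smul_left t)
    have hval : (E t * (-D)) (v0 + I t) + E t (0 + k t) = -(D (u t)) + g t := by
      have hk2 : E t (k t) = g t := by
        show E t (NormedSpace.exp (t • D) (g t)) = g t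
        rw [← ContinuousLinearMap.mul_apply, hone, ContinuousLinearMap.one_apply]
      rw [zero_add, hk2, hcE.eq, ContinuousLinearMap.mul_apply,
        ContinuousLinearMap.neg_apply]
    rw [← hval]
    exact h
  have hFd : ∀ t : ℝ, HasDerivAt F (-(D (F t + Cw (z t)))) t := by
    intro t
    have hut : u t = F t + Cw (z t) := by rw [hFdef]; simp
    have h := (hud t).sub (hCz t)
    have hv : -(D (u t)) + g t - g t = -(D (F t + Cw (z t))) := by
      rw [hut]; abel
    rw [← hv]
    exact h
  have hFdiff : Differentiable ℝ F := fun t => (hFd t).differentiableAt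
  have hFC : ContDiff ℝ 1 F := by
    rw [contDiff_one_iff_deriv]
    refine ⟨hFdiff, ?_⟩
    have hderivF : deriv F = fun t => -(D (F t + Cw (z t))) :=
      funext fun t => (hFd t).deriv
    rw [hderivF]
    exact (D.continuous.comp ((hFdiff.continuous).add
      (Cw.continuous.comp hz.continuous))).neg
  have hη0 : η 0 = (w₀ : H) := by
    rw [hηeq 0, hS0, hz0]
    simp
  refine ⟨?_, ?_, ?_⟩
  · rw [hη0]
    exact Submodule.orthogonalProjectionOnto_mem_subspace_eq_self w₀
  · exact (hFC.contDiffOn).congr hPF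
  · intro t ht
    refine ⟨by rw [hzeq t, hC'P (η t)], ?_⟩
    have h := (hFd t).hasDerivWithinAt (s := Set.Ici (0:ℝ))
    have h2 := h.congr (fun s hs => hPF s hs) (hPF t ht)
    have hval : -(D ((W.orthogonalProjectionOnto (η t) : W) + ⟨C (z t), hCrange (z t)⟩))
        = -(D (F t + Cw (z t))) := by
      rw [hPF t ht]; rfl
    rw [hval]
    exact h2
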